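/- The class of languages accepted by repetitive nondeterministic finite automata with translucent words (RNFAwtws) is closed under union: if L₁ and L₂ are languages over the same finite alphabet Σ, each accepted by an RNFAwtw, then L₁ ∪ L₂ is accepted by an RNFAwtw. -/

import Mathlib

/-! Repetitive (non)deterministic finite automata with translucent words. -/

/-- Behavior of the automaton at the end-of-tape marker: halt accepting,
halt rejecting, or (in the repetitive case) continue in one of a set of states. -/
inductive EndBehavior (Q : Type) : Type where
  | accept : EndBehavior Q
  | reject : EndBehavior Q
  | cont : Set Q → EndBehavior Q

/-- `InStar S w` means `w` belongs to the Kleene star `S*` of the set of words `S`. -/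
def InStar {α : Type} (S : Set (List α)) (w : List α) : Prop :=
  ∃ l : List (List α), (∀ u ∈ l, u ∈ S) ∧ l.flatten = w

/-- A (repetitive) nondeterministic finite automaton with translucent words,
with state set `Q` over the alphabet `α`.  `tl q` is the set `τ(q)` of
translucent words of the state `q`, `delta` is the transition function and
`endB q` is the behavior at the end-of-tape marker.  The fields `tl_fin`,
`code_ne`, `prefix_code` and `tl_head` express that each `τ(q)` is finite,
that `τ(q) ∪ Σ_q` is a prefix code (no empty word, and no member is a proper
prefix of another member), and that no word of `τ(q)` begins with a letter
readable in `q`. -/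
structure RNFAwtw (α : Type) (Q : Type) : Type where
  init : Set Q
  tl : Q → Set (List α)
  delta : Q → α → Set Q
  endB : Q → EndBehavior Q
  tl_fin : ∀ q, (tl q).Finite
  code_ne : ∀ q, [] ∉ tl q
  prefix_code : ∀ q,
    ∀ u ∈ tl q ∪ {w | ∃ a, (delta q a).Nonempty ∧ w = [a]},
    ∀ v ∈ tl q ∪ {w | ∃ a, (delta q a).Nonempty ∧ w = [a]},
      u <+: v → u = v
  tl_head : ∀ q, ∀ t ∈ tl q, ∀ a, (delta q a).Nonempty → ¬ [a] <+: t

/-- Configurations: a pair of a state and the remaining tape content, or one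
of the two halting configurations. -/
inductive Conf (α Q : Type) : Type where
  | state : Q → List α → Conf α Q
  | accept : Conf α Q
  | reject : Conf α Q

/-- The single-step computation relation of an RNFAwtw. -/
inductive RNFAwtw.Step {α Q : Type} (A : RNFAwtw α Q) :
    Conf α Q → Conf α Q → Prop where
  | read {q q' : Q} {a : α} {u v : List α} :
      InStar (A.tl q) u → q' ∈ A.delta q a →
      RNFAwtw.Step A (Conf.state q (u ++ a :: v)) (Conf.state q' (u ++ v))
  | stuck {q : Q} {a : α} {u v : List α} :
      InStar (A.tl q) u → A.delta q a = ∅ →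
      (∀ t ∈ A.tl q, ¬ t <+: (a :: v)) →
      RNFAwtw.Step A (Conf.state q (u ++ a :: v)) Conf.reject
  | haltAccept {q : Q} {w : List α} :
      InStar (A.tl q) w → A.endB q = EndBehavior.accept →
      RNFAwtw.Step A (Conf.state q w) Conf.accept
  | haltReject {q : Q} {w : List α} :
      InStar (A.tl q) w → A.endB q = EndBehavior.reject →
      RNFAwtw.Step A (Conf.state q w) Conf.reject
  | goOn {q q' : Q} {w : List α} {S : Set Q} :
      InStar (A.tl q) w → A.endB q = EndBehavior.cont S → q' ∈ S →
      RNFAwtw.Step A (Conf.state q w) (Conf.state q' w)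

/-- `A` accepts the word `w`. -/
def RNFAwtw.Accepts {α Q : Type} (A : RNFAwtw α Q) (w : List α) : Prop :=
  ∃ q0 ∈ A.init, Relation.ReflTransGen A.Step (Conf.state q0 w) Conf.accept

/-- The language accepted by `A`. -/
def RNFAwtw.lang {α Q : Type} (A : RNFAwtw α Q) : Set (List α) :=
  { w | A.Accepts w }

/-- `A` is deterministic: one initial state, at most one transition per
state/letter pair, and at the end-of-tape marker the continuation (if any)
is a single state. -/
def RNFAwtw.Deterministic {α Q : Type} (A : RNFAwtw α Q) : Prop :=
  (∃ q0, A.init = {q0}) ∧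
  (∀ q a, (A.delta q a).Subsingleton) ∧
  (∀ q S, A.endB q = EndBehavior.cont S → ∃ q', S = {q'})

/-- `A` is non-repetitive: at the end-of-tape marker it always halts. -/
def RNFAwtw.NonRepetitive {α Q : Type} (A : RNFAwtw α Q) : Prop :=
  ∀ q S, A.endB q ≠ EndBehavior.cont S

/-- `L` is accepted by some repetitive NFAwtw (with a finite state set). -/
def AcceptedByRNFAwtw {α : Type} (L : Set (List α)) : Prop :=
  ∃ (Q : Type) (_ : Finite Q) (A : RNFAwtw α Q), A.lang = L

/-- `L` is accepted by some repetitive DFAwtw. -/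
def AcceptedByRDFAwtw {α : Type} (L : Set (List α)) : Prop :=
  ∃ (Q : Type) (_ : Finite Q) (A : RNFAwtw α Q), A.Deterministic ∧ A.lang = L

/-- `L` is accepted by some (non-repetitive) NFAwtw. -/
def AcceptedByNFAwtw {α : Type} (L : Set (List α)) : Prop :=
  ∃ (Q : Type) (_ : Finite Q) (A : RNFAwtw α Q), A.NonRepetitive ∧ A.lang = L

/-- `L` is accepted by some (non-repetitive) DFAwtw. -/
def AcceptedByDFAwtw {α : Type} (L : Set (List α)) : Prop :=
  ∃ (Q : Type) (_ : Finite Q) (A : RNFAwtw α Q),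
    A.NonRepetitive ∧ A.Deterministic ∧ A.lang = L

/-- The two-letter alphabet `{a, b}`. -/
inductive Letter : Type where
  | a : Letter
  | b : Letter
deriving DecidableEq

instance : Fintype Letter :=
  ⟨{Letter.a, Letter.b}, fun x => by cases x <;> simp⟩

section UnionAux

variable {α Q₁ Q₂ : Type}

/-- The disjoint-union automaton. -/
def sumA (A₁ : RNFAwtw α Q₁) (A₂ : RNFAwtw α Q₂) : RNFAwtw α (Q₁ ⊕ Q₂) where
  init := Sum.elim A₁.init A₂.init
  tl := Sum.elim A₁.tl A₂.tl
  delta s a := match s with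
    | .inl q => Sum.inl '' A₁.delta q a
    | .inr q => Sum.inr '' A₂.delta q a
  endB s := match s with
    | .inl q => match A₁.endB q with
      | .accept => .accept
      | .reject => .reject
      | .cont S => .cont (Sum.inl '' S)
    | .inr q => match A₂.endB q with
      | .accept => .accept
      | .reject => .reject
      | .cont S => .cont (Sum.inr '' S)
  tl_fin := by rintro (q | q)
               · exact A₁.tl_fin q
               · exact A₂.tl_fin q
  code_ne := by rintro (q | q)
                · exact A₁.code_ne q
                · exact A₂.code_ne q
  prefix_code := by
    rintro (q | q) <;> simp only [Sum.elim_inl, Sum.elim_inr, Set.image_nonempty]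
    · exact A₁.prefix_code q
    · exact A₂.prefix_code q
  tl_head := by
    rintro (q | q) <;> simp only [Sum.elim_inl, Sum.elim_inr, Set.image_nonempty]
    · exact A₁.tl_head q
    · exact A₂.tl_head q

/-- Lift a configuration of the left automaton. -/
def liftL : Conf α Q₁ → Conf α (Q₁ ⊕ Q₂)
  | .state q w => .state (Sum.inl q) w
  | .accept => .accept
  | .reject => .reject

/-- Lift a configuration of the right automaton. -/
def liftR : Conf α Q₂ → Conf α (Q₁ ⊕ Q₂)
  | .state q w => .state (Sum.inr q) w
  | .accept => .accept
  | .reject => .reject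

theorem stepL {A₁ : RNFAwtw α Q₁} {A₂ : RNFAwtw α Q₂} {c c' : Conf α Q₁}
    (h : A₁.Step c c') : (sumA A₁ A₂).Step (liftL c) (liftL c') := by
  cases h with
  | read hu hq =>
      exact .read hu (Set.mem_image_of_mem _ hq)
  | stuck hu hd ht =>
      refine .stuck hu ?_ ht
      show Sum.inl '' _ = ∅
      rw [hd, Set.image_empty]
  | haltAccept hw he =>
      refine .haltAccept hw ?_
      show (match A₁.endB _ with
        | .accept => .accept | .reject => .reject
        | .cont S => .cont (Sum.inl '' S)) = EndBehavior.accept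
      rw [he]
  | haltReject hw he =>
      refine .haltReject hw ?_
      show (match A₁.endB _ with
        | .accept => .accept | .reject => .reject
        | .cont S => .cont (Sum.inl '' S)) = EndBehavior.reject
      rw [he]
  | goOn hw he hq =>
      refine .goOn hw ?_ (Set.mem_image_of_mem Sum.inl hq)
      show (match A₁.endB _ with
        | .accept => .accept | .reject => .reject
        | .cont S => .cont (Sum.inl '' S)) = EndBehavior.cont _
      rw [he]

theorem stepR {A₁ : RNFAwtw α Q₁} {A₂ : RNFAwtw α Q₂} {c c' : Conf α Q₂}
    (h : A₂.Step c c') : (sumA A₁ A₂).Step (liftR c) (liftR c') := by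
  cases h with
  | read hu hq =>
      exact .read hu (Set.mem_image_of_mem _ hq)
  | stuck hu hd ht =>
      refine .stuck hu ?_ ht
      show Sum.inr '' _ = ∅
      rw [hd, Set.image_empty]
  | haltAccept hw he =>
      refine .haltAccept hw ?_
      show (match A₂.endB _ with
        | .accept => .accept | .reject => .reject
        | .cont S => .cont (Sum.inr '' S)) = EndBehavior.accept
      rw [he]
  | haltReject hw he =>
      refine .haltReject hw ?_
      show (match A₂.endB _ with
        | .accept => .accept | .reject => .reject
        | .cont S => .cont (Sum.inr '' S)) = EndBehavior.reject
      rw [he]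
  | goOn hw he hq =>
      refine .goOn hw ?_ (Set.mem_image_of_mem Sum.inr hq)
      show (match A₂.endB _ with
        | .accept => .accept | .reject => .reject
        | .cont S => .cont (Sum.inr '' S)) = EndBehavior.cont _
      rw [he]

theorem stepL_back {A₁ : RNFAwtw α Q₁} {A₂ : RNFAwtw α Q₂} {c : Conf α Q₁}
    {d : Conf α (Q₁ ⊕ Q₂)} (h : (sumA A₁ A₂).Step (liftL c) d) :
    ∃ c', d = liftL c' ∧ A₁.Step c c' := by
  cases c with
  | accept => cases h
  | reject => cases h
  | state q w =>
    cases h with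
    | @read _ q' a u v hu hq =>
        obtain ⟨q₁', hq₁', rfl⟩ := hq
        exact ⟨.state q₁' (u ++ v), rfl, .read hu hq₁'⟩
    | stuck hu hd ht =>
        refine ⟨.reject, rfl, .stuck hu ?_ ht⟩
        have : Sum.inl '' A₁.delta q _ = ∅ := hd
        exact Set.image_eq_empty.mp this
    | haltAccept hw he =>
        refine ⟨.accept, rfl, .haltAccept hw ?_⟩
        revert he
        show (match A₁.endB q with
          | .accept => .accept | .reject => .reject
          | .cont S => EndBehavior.cont (Sum.inl '' S)) = EndBehavior.accept → _
        cases A₁.endB q <;> simp <;> exact fun h => h.symm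
    | haltReject hw he =>
        refine ⟨.reject, rfl, .haltReject hw ?_⟩
        revert he
        show (match A₁.endB q with
          | .accept => .accept | .reject => .reject
          | .cont S => EndBehavior.cont (Sum.inl '' S)) = EndBehavior.reject → _
        cases A₁.endB q <;> simp <;> exact fun h => h.symm
    | @goOn _ q' _ S hw he hq =>
        have hS : ∃ S₁, A₁.endB q = EndBehavior.cont S₁ ∧ S = Sum.inl '' S₁ := by
          revert he
          show (match A₁.endB q with
            | .accept => .accept | .reject => .reject
            | .cont S => EndBehavior.cont (Sum.inl '' S)) = EndBehavior.cont S → _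
          cases A₁.endB q <;> simp <;> exact fun h => h.symm
        obtain ⟨S₁, hS₁, rfl⟩ := hS
        obtain ⟨q₁', hq₁', rfl⟩ := hq
        exact ⟨.state q₁' w, rfl, .goOn hw hS₁ hq₁'⟩

theorem stepR_back {A₁ : RNFAwtw α Q₁} {A₂ : RNFAwtw α Q₂} {c : Conf α Q₂}
    {d : Conf α (Q₁ ⊕ Q₂)} (h : (sumA A₁ A₂).Step (liftR c) d) :
    ∃ c', d = liftR c' ∧ A₂.Step c c' := by
  cases c with
  | accept => cases h
  | reject => cases h
  | state q w =>
    cases h with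
    | @read _ q' a u v hu hq =>
        obtain ⟨q₂', hq₂', rfl⟩ := hq
        exact ⟨.state q₂' (u ++ v), rfl, .read hu hq₂'⟩
    | stuck hu hd ht =>
        refine ⟨.reject, rfl, .stuck hu ?_ ht⟩
        have : Sum.inr '' A₂.delta q _ = ∅ := hd
        exact Set.image_eq_empty.mp this
    | haltAccept hw he =>
        refine ⟨.accept, rfl, .haltAccept hw ?_⟩
        revert he
        show (match A₂.endB q with
          | .accept => .accept | .reject => .reject
          | .cont S => EndBehavior.cont (Sum.inr '' S)) = EndBehavior.accept → _
        cases A₂.endB q <;> simp <;> exact fun h => h.symm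
    | haltReject hw he =>
        refine ⟨.reject, rfl, .haltReject hw ?_⟩
        revert he
        show (match A₂.endB q with
          | .accept => .accept | .reject => .reject
          | .cont S => EndBehavior.cont (Sum.inr '' S)) = EndBehavior.reject → _
        cases A₂.endB q <;> simp <;> exact fun h => h.symm
    | @goOn _ q' _ S hw he hq =>
        have hS : ∃ S₂, A₂.endB q = EndBehavior.cont S₂ ∧ S = Sum.inr '' S₂ := by
          revert he
          show (match A₂.endB q with
            | .accept => .accept | .reject => .reject
            | .cont S => EndBehavior.cont (Sum.inr '' S)) = EndBehavior.cont S → _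
          cases A₂.endB q <;> simp <;> exact fun h => h.symm
        obtain ⟨S₂, hS₂, rfl⟩ := hS
        obtain ⟨q₂', hq₂', rfl⟩ := hq
        exact ⟨.state q₂' w, rfl, .goOn hw hS₂ hq₂'⟩

theorem reachL_back {A₁ : RNFAwtw α Q₁} {A₂ : RNFAwtw α Q₂} {d : Conf α (Q₁ ⊕ Q₂)}
    (h : Relation.ReflTransGen (sumA A₁ A₂).Step d Conf.accept) :
    ∀ c : Conf α Q₁, d = liftL c → Relation.ReflTransGen A₁.Step c Conf.accept := by
  induction h using Relation.ReflTransGen.head_induction_on with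
  | refl =>
      rintro (⟨q, w⟩ | _ | _) he
      · exact absurd he (by simp [liftL])
      · exact .refl
      · exact absurd he (by simp [liftL])
  | head hstep _ ih =>
      rintro c rfl
      obtain ⟨c', rfl, hs⟩ := stepL_back hstep
      exact .head hs (ih c' rfl)

theorem reachR_back {A₁ : RNFAwtw α Q₁} {A₂ : RNFAwtw α Q₂} {d : Conf α (Q₁ ⊕ Q₂)}
    (h : Relation.ReflTransGen (sumA A₁ A₂).Step d Conf.accept) :
    ∀ c : Conf α Q₂, d = liftR c → Relation.ReflTransGen A₂.Step c Conf.accept := by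
  induction h using Relation.ReflTransGen.head_induction_on with
  | refl =>
      rintro (⟨q, w⟩ | _ | _) he
      · exact absurd he (by simp [liftR])
      · exact .refl
      · exact absurd he (by simp [liftR])
  | head hstep _ ih =>
      rintro c rfl
      obtain ⟨c', rfl, hs⟩ := stepR_back hstep
      exact .head hs (ih c' rfl)

theorem sumA_lang (A₁ : RNFAwtw α Q₁) (A₂ : RNFAwtw α Q₂) :
    (sumA A₁ A₂).lang = A₁.lang ∪ A₂.lang := by
  ext w
  constructor
  · rintro ⟨q0, hq0, hr⟩
    cases q0 with
    | inl q => exact Or.inl ⟨q, hq0, reachL_back hr (Conf.state q w) rfl⟩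
    | inr q => exact Or.inr ⟨q, hq0, reachR_back hr (Conf.state q w) rfl⟩
  · rintro (⟨q0, hq0, hr⟩ | ⟨q0, hq0, hr⟩)
    · exact ⟨Sum.inl q0, hq0,
        Relation.ReflTransGen.lift (r := A₁.Step) (p := (sumA A₁ A₂).Step) liftL (fun _ _ => stepL) _ _ hr⟩
    · exact ⟨Sum.inr q0, hq0,
        Relation.ReflTransGen.lift (r := A₂.Step) (p := (sumA A₁ A₂).Step) liftR (fun _ _ => stepR) _ _ hr⟩

end UnionAux

/-- The class of languages accepted by repetitive nondeterministic finite
automata with translucent words is closed under union. -/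
theorem RNFAwtw_closed_under_union {α : Type} [Finite α]
    (L₁ L₂ : Set (List α))
    (h₁ : AcceptedByRNFAwtw L₁) (h₂ : AcceptedByRNFAwtw L₂) :
    AcceptedByRNFAwtw (L₁ ∪ L₂) := by
  obtain ⟨Q₁, _, A₁, rfl⟩ := h₁
  obtain ⟨Q₂, _, A₂, rfl⟩ := h₂
  exact ⟨Q₁ ⊕ Q₂, inferInstance, sumA A₁ A₂, sumA_lang A₁ A₂⟩
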